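/- Let ζ(x₁, x₂) = (1/2) ln(((x₁+a)² + x₂²)/((x₁−a)² + x₂²)). Suppose x = (x₁, x₂) satisfies |x₁| ≤ C₀(ε + x₂²) and a² ≤ C₁ ε for positive constants C₀, C₁, with (x₁ ± a)² + x₂² ≥ c(ε + x₂²) for some c > 0. Then there exist constants C (depending only on C₀, C₁, c) with |∂₁ζ(x)| ≤ C √ε/(ε + x₂²) and |∂₂ζ(x)| ≤ C √ε |x₂|/(ε + x₂²). -/

import Mathlib

open Real

/-- Partial derivative in the `j`-th coordinate direction of a function on `ℝ × ℝ`. -/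
noncomputable def pd (j : Fin 2) (f : ℝ × ℝ → ℝ) (p : ℝ × ℝ) : ℝ :=
  if j = 0 then deriv (fun t => f (t, p.2)) p.1 else deriv (fun t => f (p.1, t)) p.2

lemma aux_deriv1 (a b y : ℝ) (h1 : 0 < (y+a)^2+b^2) (h2 : 0 < (y-a)^2+b^2) :
    deriv (fun t => (1/2 : ℝ)*Real.log (((t+a)^2+b^2)/((t-a)^2+b^2))) y
      = (y+a)/((y+a)^2+b^2) - (y-a)/((y-a)^2+b^2) := by
  have hc1 : ContinuousAt (fun t : ℝ => (t+a)^2+b^2) y := by fun_prop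
  have hc2 : ContinuousAt (fun t : ℝ => (t-a)^2+b^2) y := by fun_prop
  have hev : (fun t => (1/2 : ℝ)*Real.log (((t+a)^2+b^2)/((t-a)^2+b^2)))
      =ᶠ[nhds y] (fun t => (1/2 : ℝ)*(Real.log ((t+a)^2+b^2) - Real.log ((t-a)^2+b^2))) := by
    filter_upwards [hc1.eventually (eventually_gt_nhds h1),
      hc2.eventually (eventually_gt_nhds h2)] with t ht1 ht2
    rw [Real.log_div ht1.ne' ht2.ne']
  rw [hev.deriv_eq]
  have H1 : HasDerivAt (fun t : ℝ => (t+a)^2+b^2) (2*(y+a)) y := by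
    have h := (((hasDerivAt_id y).add_const a).pow 2).add_const (b^2)
    exact h.congr_deriv (by simp)
  have H2 : HasDerivAt (fun t : ℝ => (t-a)^2+b^2) (2*(y-a)) y := by
    have h := (((hasDerivAt_id y).sub_const a).pow 2).add_const (b^2)
    exact h.congr_deriv (by simp)
  have H := ((H1.log h1.ne').sub (H2.log h2.ne')).const_mul (1/2 : ℝ)
  erw [H.deriv]
  field_simp

lemma aux_deriv2 (p q y : ℝ) (h1 : 0 < p+y^2) (h2 : 0 < q+y^2) :
    deriv (fun t => (1/2 : ℝ)*Real.log ((p+t^2)/(q+t^2))) y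
      = y/(p+y^2) - y/(q+y^2) := by
  have hc1 : ContinuousAt (fun t : ℝ => p+t^2) y := by fun_prop
  have hc2 : ContinuousAt (fun t : ℝ => q+t^2) y := by fun_prop
  have hev : (fun t => (1/2 : ℝ)*Real.log ((p+t^2)/(q+t^2)))
      =ᶠ[nhds y] (fun t => (1/2 : ℝ)*(Real.log (p+t^2) - Real.log (q+t^2))) := by
    filter_upwards [hc1.eventually (eventually_gt_nhds h1),
      hc2.eventually (eventually_gt_nhds h2)] with t ht1 ht2
    rw [Real.log_div ht1.ne' ht2.ne']
  rw [hev.deriv_eq]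
  have H1 : HasDerivAt (fun t : ℝ => p+t^2) (2*y) y := by
    have h := ((hasDerivAt_id y).pow 2).const_add p
    exact h.congr_deriv (by simp)
  have H2 : HasDerivAt (fun t : ℝ => q+t^2) (2*y) y := by
    have h := ((hasDerivAt_id y).pow 2).const_add q
    exact h.congr_deriv (by simp)
  have H := ((H1.log h1.ne').sub (H2.log h2.ne')).const_mul (1/2 : ℝ)
  erw [H.deriv]
  field_simp

set_option maxHeartbeats 1000000 in
/-- Gradient estimates for `ζ(x) = (1/2) ln(((x₁+a)²+x₂²)/((x₁−a)²+x₂²))` in the narrow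
region: `|∂₁ζ| ≤ C√ε/(ε+x₂²)` and `|∂₂ζ| ≤ C√ε|x₂|/(ε+x₂²)`, with `C` depending only
on `C₀, C₁, c`. -/
theorem stmt15 (C₀ C₁ c : ℝ) (hC₀ : 0 < C₀) (hC₁ : 0 < C₁) (hc : 0 < c) :
    ∃ C > (0:ℝ), ∀ ε a x₁ x₂ : ℝ, 0 < ε → 0 < a →
      |x₁| ≤ C₀ * (ε + x₂ ^ 2) → a ^ 2 ≤ C₁ * ε →
      c * (ε + x₂ ^ 2) ≤ (x₁ + a) ^ 2 + x₂ ^ 2 →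
      c * (ε + x₂ ^ 2) ≤ (x₁ - a) ^ 2 + x₂ ^ 2 →
      |pd 0 (fun p => (1 / 2) *
          Real.log (((p.1 + a) ^ 2 + p.2 ^ 2) / ((p.1 - a) ^ 2 + p.2 ^ 2))) (x₁, x₂)|
        ≤ C * Real.sqrt ε / (ε + x₂ ^ 2)
      ∧ |pd 1 (fun p => (1 / 2) *
          Real.log (((p.1 + a) ^ 2 + p.2 ^ 2) / ((p.1 - a) ^ 2 + p.2 ^ 2))) (x₁, x₂)|
        ≤ C * Real.sqrt ε * |x₂| / (ε + x₂ ^ 2) := by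
  have hsC₁ : 0 < Real.sqrt C₁ := Real.sqrt_pos.2 hC₁
  refine ⟨2*Real.sqrt C₁*((1+3*C₁)/c^2 + 2/c) + 4*Real.sqrt C₁*C₀/c^2 + 1, by positivity, ?_⟩
  intro ε a x₁ x₂ hε ha hx₁ ha2 hDa hDb
  have hE : (0:ℝ) < ε + x₂ ^ 2 := by positivity
  have hD1 : (0:ℝ) < (x₁ + a) ^ 2 + x₂ ^ 2 := lt_of_lt_of_le (by positivity) hDa
  have hD2 : (0:ℝ) < (x₁ - a) ^ 2 + x₂ ^ 2 := lt_of_lt_of_le (by positivity) hDb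
  have hDD : (0:ℝ) < ((x₁+a)^2+x₂^2)*((x₁-a)^2+x₂^2) := mul_pos hD1 hD2
  have hsε : (0:ℝ) < Real.sqrt ε := Real.sqrt_pos.2 hε
  have haε : a ≤ Real.sqrt C₁ * Real.sqrt ε := by
    rw [← Real.sqrt_mul hC₁.le]
    rw [← Real.sqrt_sq ha.le]
    exact Real.sqrt_le_sqrt ha2
  have hE2 : c^2 * (ε+x₂^2)^2 ≤ ((x₁+a)^2+x₂^2)*((x₁-a)^2+x₂^2) := by
    have h := mul_le_mul hDa hDb (by positivity : (0:ℝ) ≤ c*(ε+x₂^2)) hD1.le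
    calc c^2*(ε+x₂^2)^2 = (c*(ε+x₂^2))*(c*(ε+x₂^2)) := by ring
      _ ≤ _ := h
  have hK : (0:ℝ) < (1+3*C₁)/c^2 + 2/c := by positivity
  constructor
  · -- first partial derivative
    have hpd : pd 0 (fun p => (1 / 2) *
        Real.log (((p.1 + a) ^ 2 + p.2 ^ 2) / ((p.1 - a) ^ 2 + p.2 ^ 2))) (x₁, x₂)
        = (x₁+a)/((x₁+a)^2+x₂^2) - (x₁-a)/((x₁-a)^2+x₂^2) := by
      simp only [pd, if_pos rfl]
      exact aux_deriv1 a x₂ x₁ hD1 hD2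
    rw [hpd]
    have heq : (x₁+a)/((x₁+a)^2+x₂^2) - (x₁-a)/((x₁-a)^2+x₂^2)
        = (2*a*(x₂^2+a^2-x₁^2))/(((x₁+a)^2+x₂^2)*((x₁-a)^2+x₂^2)) := by
      field_simp
      ring
    rw [heq, abs_div, abs_of_pos hDD, div_le_div_iff₀ hDD hE]
    have hN : |2*a*(x₂^2+a^2-x₁^2)| ≤ 2*a*(x₂^2+a^2+x₁^2) := by
      rw [abs_mul, abs_of_nonneg (by positivity : (0:ℝ) ≤ 2*a)]
      gcongr
      exact abs_le.2 ⟨by nlinarith [sq_nonneg x₂, sq_nonneg a], by nlinarith [sq_nonneg x₁]⟩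
    have hx1sq : x₁^2 ≤ 2*((x₁+a)^2+x₂^2) + 2*C₁*(ε+x₂^2) := by
      nlinarith [sq_nonneg (x₁ + 2*a), sq_nonneg x₂]
    have hD1E : c * (((x₁+a)^2+x₂^2) * (ε+x₂^2)) ≤ ((x₁+a)^2+x₂^2)*((x₁-a)^2+x₂^2) := by
      calc c * (((x₁+a)^2+x₂^2) * (ε+x₂^2)) = ((x₁+a)^2+x₂^2) * (c * (ε+x₂^2)) := by ring
      _ ≤ ((x₁+a)^2+x₂^2)*((x₁-a)^2+x₂^2) := by gcongr
    have h1 : (x₂^2+a^2+x₁^2) * (ε+x₂^2)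
        ≤ (1+3*C₁)*(ε+x₂^2)^2 + 2*(((x₁+a)^2+x₂^2) * (ε+x₂^2)) := by
      have t1 : x₂^2*(ε+x₂^2) ≤ (ε+x₂^2)*(ε+x₂^2) :=
        mul_le_mul_of_nonneg_right (by nlinarith [sq_nonneg x₂]) hE.le
      have t2 : a^2*(ε+x₂^2) ≤ (C₁*(ε+x₂^2))*(ε+x₂^2) := by
        apply mul_le_mul_of_nonneg_right _ hE.le
        nlinarith [sq_nonneg x₂, hC₁]
      have t3 := mul_le_mul_of_nonneg_right hx1sq hE.le
      nlinarith [t1, t2, t3]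
    have s1 : (1+3*C₁)*(ε+x₂^2)^2
        ≤ (1+3*C₁)/c^2 * (((x₁+a)^2+x₂^2)*((x₁-a)^2+x₂^2)) := by
      rw [div_mul_eq_mul_div, le_div_iff₀ (by positivity : (0:ℝ) < c^2)]
      calc (1+3*C₁)*(ε+x₂^2)^2 * c^2 = (1+3*C₁)*(c^2*(ε+x₂^2)^2) := by ring
        _ ≤ (1+3*C₁)*(((x₁+a)^2+x₂^2)*((x₁-a)^2+x₂^2)) := by
            apply mul_le_mul_of_nonneg_left hE2 (by linarith)
    have s2 : 2*(((x₁+a)^2+x₂^2) * (ε+x₂^2))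
        ≤ 2/c * (((x₁+a)^2+x₂^2)*((x₁-a)^2+x₂^2)) := by
      rw [div_mul_eq_mul_div, le_div_iff₀ hc]
      calc 2*(((x₁+a)^2+x₂^2) * (ε+x₂^2)) * c
          = 2*(c * (((x₁+a)^2+x₂^2) * (ε+x₂^2))) := by ring
        _ ≤ 2*(((x₁+a)^2+x₂^2)*((x₁-a)^2+x₂^2)) := by
            apply mul_le_mul_of_nonneg_left hD1E (by norm_num)
    have hkey : (x₂^2+a^2+x₁^2) * (ε+x₂^2)
        ≤ ((1+3*C₁)/c^2 + 2/c) * (((x₁+a)^2+x₂^2)*((x₁-a)^2+x₂^2)) := by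
      calc (x₂^2+a^2+x₁^2) * (ε+x₂^2)
          ≤ (1+3*C₁)*(ε+x₂^2)^2 + 2*(((x₁+a)^2+x₂^2) * (ε+x₂^2)) := h1
        _ ≤ (1+3*C₁)/c^2 * (((x₁+a)^2+x₂^2)*((x₁-a)^2+x₂^2))
            + 2/c * (((x₁+a)^2+x₂^2)*((x₁-a)^2+x₂^2)) := add_le_add s1 s2
        _ = ((1+3*C₁)/c^2 + 2/c) * (((x₁+a)^2+x₂^2)*((x₁-a)^2+x₂^2)) := by ring
    have step1 : |2*a*(x₂^2+a^2-x₁^2)| * (ε+x₂^2)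
        ≤ 2*a * ((x₂^2+a^2+x₁^2) * (ε+x₂^2)) := by
      have := mul_le_mul_of_nonneg_right hN hE.le
      linarith [this]
    have step2 : 2*a * ((x₂^2+a^2+x₁^2) * (ε+x₂^2))
        ≤ 2*(Real.sqrt C₁*Real.sqrt ε)
          * (((1+3*C₁)/c^2 + 2/c) * (((x₁+a)^2+x₂^2)*((x₁-a)^2+x₂^2))) := by
      apply mul_le_mul (by linarith) hkey (by positivity) (by positivity)
    have hCfin : 2*Real.sqrt C₁*((1+3*C₁)/c^2 + 2/c)
        ≤ 2*Real.sqrt C₁*((1+3*C₁)/c^2 + 2/c) + 4*Real.sqrt C₁*C₀/c^2 + 1 := by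
      have : (0:ℝ) ≤ 4*Real.sqrt C₁*C₀/c^2 := by positivity
      linarith
    calc |2*a*(x₂^2+a^2-x₁^2)| * (ε+x₂^2)
        ≤ 2*(Real.sqrt C₁*Real.sqrt ε)
          * (((1+3*C₁)/c^2 + 2/c) * (((x₁+a)^2+x₂^2)*((x₁-a)^2+x₂^2))) :=
          le_trans step1 step2
      _ = (2*Real.sqrt C₁*((1+3*C₁)/c^2 + 2/c)) * Real.sqrt ε
          * (((x₁+a)^2+x₂^2)*((x₁-a)^2+x₂^2)) := by ring
      _ ≤ (2*Real.sqrt C₁*((1+3*C₁)/c^2 + 2/c) + 4*Real.sqrt C₁*C₀/c^2 + 1) * Real.sqrt ε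
          * (((x₁+a)^2+x₂^2)*((x₁-a)^2+x₂^2)) := by gcongr
  · -- second partial derivative
    have hpd : pd 1 (fun p => (1 / 2) *
        Real.log (((p.1 + a) ^ 2 + p.2 ^ 2) / ((p.1 - a) ^ 2 + p.2 ^ 2))) (x₁, x₂)
        = x₂/((x₁+a)^2+x₂^2) - x₂/((x₁-a)^2+x₂^2) := by
      have h0 : pd 1 (fun p => (1 / 2) *
          Real.log (((p.1 + a) ^ 2 + p.2 ^ 2) / ((p.1 - a) ^ 2 + p.2 ^ 2))) (x₁, x₂)
          = deriv (fun t => (1/2 : ℝ)*Real.log (((x₁+a)^2+t^2)/((x₁-a)^2+t^2))) x₂ := by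
        simp [pd]
      rw [h0]
      exact aux_deriv2 ((x₁+a)^2) ((x₁-a)^2) x₂ hD1 hD2
    rw [hpd]
    have heq : x₂/((x₁+a)^2+x₂^2) - x₂/((x₁-a)^2+x₂^2)
        = (-(4*a*x₁*x₂))/(((x₁+a)^2+x₂^2)*((x₁-a)^2+x₂^2)) := by
      field_simp
      ring
    rw [heq, abs_div, abs_of_pos hDD, div_le_div_iff₀ hDD hE]
    have hN : |(-(4*a*x₁*x₂))| = 4*a*|x₁| * |x₂| := by
      rw [abs_neg, abs_mul, abs_mul, abs_of_nonneg (by positivity : (0:ℝ) ≤ 4*a)]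
    rw [hN]
    have step1 : 4*a*|x₁| * |x₂| * (ε+x₂^2)
        ≤ 4*(Real.sqrt C₁*Real.sqrt ε)*(C₀*(ε+x₂^2)) * |x₂| * (ε+x₂^2) := by
      gcongr
    have step2 : (ε+x₂^2)^2 ≤ (((x₁+a)^2+x₂^2)*((x₁-a)^2+x₂^2))/c^2 := by
      rw [le_div_iff₀ (by positivity : (0:ℝ) < c^2)]
      calc (ε+x₂^2)^2 * c^2 = c^2*(ε+x₂^2)^2 := by ring
        _ ≤ _ := hE2
    have hCfin : 4*Real.sqrt C₁*C₀/c^2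
        ≤ 2*Real.sqrt C₁*((1+3*C₁)/c^2 + 2/c) + 4*Real.sqrt C₁*C₀/c^2 + 1 := by
      have : (0:ℝ) ≤ 2*Real.sqrt C₁*((1+3*C₁)/c^2 + 2/c) := by positivity
      linarith
    calc 4*a*|x₁| * |x₂| * (ε+x₂^2)
        ≤ 4*(Real.sqrt C₁*Real.sqrt ε)*(C₀*(ε+x₂^2)) * |x₂| * (ε+x₂^2) := step1
      _ = (4*Real.sqrt C₁*C₀) * Real.sqrt ε * |x₂| * (ε+x₂^2)^2 := by ring
      _ ≤ (4*Real.sqrt C₁*C₀) * Real.sqrt ε * |x₂|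
          * ((((x₁+a)^2+x₂^2)*((x₁-a)^2+x₂^2))/c^2) := by
          apply mul_le_mul_of_nonneg_left step2 (by positivity)
      _ = (4*Real.sqrt C₁*C₀/c^2) * Real.sqrt ε * |x₂|
          * (((x₁+a)^2+x₂^2)*((x₁-a)^2+x₂^2)) := by ring
      _ ≤ (2*Real.sqrt C₁*((1+3*C₁)/c^2 + 2/c) + 4*Real.sqrt C₁*C₀/c^2 + 1) * Real.sqrt ε * |x₂|
          * (((x₁+a)^2+x₂^2)*((x₁-a)^2+x₂^2)) := by gcongr
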